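/- arXiv:2309.05639 — 3 statements merged into one kernel-verified Lean document; each statement's English description precedes it below -/
import Mathlib

section
/- Theorem 2 (Unbiasedness for deterministic-trend DGPs): Let b_0,…,b_q : ℕ → ℝ with b_0 ≡ 1, let T := {τ−R+1,…,τ} with R ≥ q+1, let X be the R×(q+1) matrix X_{s,k} = b_k(t_s) for t_s ∈ T, assume XᵀX is invertible, let H_k := b_k(τ+h), and define the forecast weights w := H·(XᵀX)⁻¹·Xᵀ. Suppose y_t = y¹_t + y²_t + y³_t for all t, where (y¹_t) is integrable with E[y¹_t] = μ for every t ∈ T ∪ {τ+h}, (y²_t)_{t∈ℕ} is an integrable random walk y²_t = y²_{t−1} + u_t with E[u_t] = 0 for all t ≥ 1, and y³_t = Σ_{k=0}^{q₀} c_k·b_k(t) is a deterministic trend with q₀ ≤ q. Then E[Σ_{t∈T} w_t·y_t − y_{τ+h}] = 0. -/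
open MeasureTheory Matrix

/-- **Theorem 2: Unbiasedness for deterministic-trend DGPs.**
Let `b 0, …, b q : ℕ → ℝ` with `b 0 ≡ 1`, let `T = {τ−R+1, …, τ}` with
`q+1 ≤ R ≤ τ`, let `X` be the `R × (q+1)` design matrix `X s k = b k (τ−R+1+s)`
with `XᵀX` invertible, let `H k = b k (τ+h)`, and define the forecast weights
`w = H (XᵀX)⁻¹ Xᵀ`. Suppose `y t = y1 t + y2 t + y3 t`, where `y1` is
integrable with constant mean `m` on `T ∪ {τ+h}`, `y2` is an integrable random
walk with mean-zero innovations, and `y3 t = ∑_{k=0}^{q0} c k • b k t` is a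
deterministic trend with `q0 ≤ q`. Then `E[∑_{t∈T} w t • y t − y (τ+h)] = 0`. -/
theorem forecast_unbiased_deterministic_trend
    {Ω : Type*} [MeasurableSpace Ω] (μ : Measure Ω) [IsProbabilityMeasure μ]
    (τ h R q : ℕ) (hτ : 1 ≤ τ) (hh : 1 ≤ h) (hR : q + 1 ≤ R) (hRτ : R ≤ τ)
    (b : Fin (q + 1) → ℕ → ℝ) (hb0 : ∀ t : ℕ, b 0 t = 1)
    (X : Matrix (Fin R) (Fin (q + 1)) ℝ)
    (hX : ∀ (s : Fin R) (k : Fin (q + 1)), X s k = b k (τ - R + 1 + (s : ℕ)))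
    (hinv : IsUnit (Xᵀ * X))
    (H : Fin (q + 1) → ℝ) (hH : ∀ k : Fin (q + 1), H k = b k (τ + h))
    (w : Fin R → ℝ) (hw : w = Matrix.vecMul H ((Xᵀ * X)⁻¹ * Xᵀ))
    (y y1 y2 u : ℕ → Ω → ℝ) (y3 : ℕ → ℝ)
    (hsum : ∀ (t : ℕ) (ω : Ω), y t ω = y1 t ω + y2 t ω + y3 t)
    (hy1int : ∀ t, Integrable (y1 t) μ)
    (hy2int : ∀ t, Integrable (y2 t) μ)
    (huint : ∀ t, Integrable (u t) μ)
    (m : ℝ)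
    (hstat : ∀ t ∈ Finset.Icc (τ - R + 1) τ ∪ {τ + h}, ∫ ω, y1 t ω ∂μ = m)
    (hrw : ∀ (t : ℕ) (ω : Ω), y2 (t + 1) ω = y2 t ω + u (t + 1) ω)
    (hu0 : ∀ t : ℕ, ∫ ω, u (t + 1) ω ∂μ = 0)
    (q0 : ℕ) (hq0 : q0 ≤ q) (c : Fin (q0 + 1) → ℝ)
    (htrend : ∀ t : ℕ,
      y3 t = ∑ k : Fin (q0 + 1), c k * b (Fin.castLE (Nat.succ_le_succ hq0) k) t) :
    ∫ ω, ((∑ s : Fin R, w s * y (τ - R + 1 + (s : ℕ)) ω) - y (τ + h) ω) ∂μ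
      = 0 := by

  have hdet := (Matrix.isUnit_iff_isUnit_det _).mp hinv
  have hwX : Matrix.vecMul w X = H := by
    rw [hw, Matrix.vecMul_vecMul, Matrix.mul_assoc, Matrix.nonsing_inv_mul _ hdet,
      Matrix.vecMul_one]
  have hkey : ∀ k : Fin (q+1),
      ∑ s : Fin R, w s * b k (τ - R + 1 + (s:ℕ)) = b k (τ + h) := by
    intro k
    have := congrFun hwX k
    simpa [Matrix.vecMul, dotProduct, hX, hH] using this
  have hsumw : ∑ s : Fin R, w s = 1 := by
    have := hkey 0
    simpa [hb0] using this
  have htr : ∑ s : Fin R, w s * y3 (τ - R + 1 + (s:ℕ)) = y3 (τ + h) := by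
    simp only [htrend, Finset.mul_sum]
    rw [Finset.sum_comm]
    refine Finset.sum_congr rfl fun k _ => ?_
    calc ∑ s : Fin R, w s * (c k * b (Fin.castLE (Nat.succ_le_succ hq0) k) (τ - R + 1 + (s:ℕ)))
        = c k * ∑ s : Fin R, w s * b (Fin.castLE (Nat.succ_le_succ hq0) k) (τ - R + 1 + (s:ℕ)) := by
          rw [Finset.mul_sum]; exact Finset.sum_congr rfl fun s _ => by ring
      _ = c k * b (Fin.castLE (Nat.succ_le_succ hq0) k) (τ + h) := by rw [hkey]
  set m2 := ∫ ω, y2 0 ω ∂μ with hm2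
  have hy2mean : ∀ t, ∫ ω, y2 t ω ∂μ = m2 := by
    intro t
    induction t with
    | zero => rfl
    | succ n ih =>
      have h1 : ∫ ω, y2 (n+1) ω ∂μ = ∫ ω, (y2 n ω + u (n+1) ω) ∂μ :=
        integral_congr_ae (Filter.Eventually.of_forall (hrw n))
      rw [h1, integral_add (hy2int n) (huint (n+1)), hu0 n, ih, add_zero]
  have hyint : ∀ t, Integrable (y t) μ := fun t => by
    have ht : y t = fun ω => y1 t ω + y2 t ω + y3 t := funext (hsum t)
    rw [ht]; exact ((hy1int t).add (hy2int t)).add (integrable_const _)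
  have hmean : ∀ t ∈ Finset.Icc (τ - R + 1) τ ∪ {τ + h},
      ∫ ω, y t ω ∂μ = m + m2 + y3 t := by
    intro t ht
    have heq : (fun ω => y t ω) = fun ω => (y1 t ω + y2 t ω) + y3 t :=
      funext fun ω => by rw [hsum]
    have h1 : ∫ ω, (y1 t ω + y2 t ω + y3 t) ∂μ
        = (∫ ω, (y1 t ω + y2 t ω) ∂μ) + ∫ (_ : Ω), y3 t ∂μ :=
      integral_add ((hy1int t).add (hy2int t)) (integrable_const _)
    have h2 : ∫ ω, (y1 t ω + y2 t ω) ∂μ = (∫ ω, y1 t ω ∂μ) + ∫ ω, y2 t ω ∂μ :=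
      integral_add (hy1int t) (hy2int t)
    rw [heq, h1, h2, hstat t ht, hy2mean t, integral_const]
    simp
  have hmem : ∀ s : Fin R, τ - R + 1 + (s:ℕ) ∈ Finset.Icc (τ - R + 1) τ ∪ {τ+h} := by
    intro s
    have := s.isLt
    simp only [Finset.mem_union, Finset.mem_Icc, Finset.mem_singleton]
    omega
  have hth : (τ + h) ∈ Finset.Icc (τ - R + 1) τ ∪ {τ+h} := by
    simp
  rw [integral_sub (integrable_finset_sum _ fun s _ => ((hyint _).const_mul _)) (hyint _),
    integral_finset_sum _ (fun s _ => ((hyint _).const_mul _))]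
  have hstep : ∀ s : Fin R,
      ∫ ω, w s * y (τ - R + 1 + (s:ℕ)) ω ∂μ = w s * (m + m2 + y3 (τ - R + 1 + (s:ℕ))) := by
    intro s
    rw [integral_const_mul, hmean _ (hmem s)]
  rw [Finset.sum_congr rfl fun s _ => hstep s, hmean _ hth]
  simp only [mul_add]
  rw [Finset.sum_add_distrib, Finset.sum_add_distrib, ← Finset.sum_mul, ← Finset.sum_mul,
    hsumw, htr]
  ring
end

section
/- Pooled-regression equivalence (second alternative, equation (19)): Consider the pooled least-squares problem minimize over β ∈ ℝ^h and α ∈ ℝ^{n×(q+1)} the objective Σ_{i=1}^n Σ_{t=τ−R+1}^{τ+h} (y_{it} − Σ_{k=1}^h 1{t = τ+k}·β_k − Σ_{k=0}^q α_{ik}·t^k)², where R ≥ q+1 and the R×(q+1) pre-treatment design matrix X with entries X_{s,k} = (τ−R+s)^k has invertible XᵀX. Then any minimizer (β̂, α̂) satisfies, for each k = 1,…,h, β̂_k = (1/n)·Σ_{i=1}^n (y_{iτ+k} − Σ_{j=0}^q ĉ_{ij}·(τ+k)^j), where ĉ_i := (XᵀX)⁻¹·Xᵀ·(y_{i,τ−R+1},…,y_{i,τ})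 is the coefficient vector of the individual pre-treatment OLS regression of y_{it} on 1, t, …, t^q over t ∈ {τ−R+1,…,τ}. In particular β̂_h equals the polynomial-regression FAT at horizon h. -/
open Matrix

lemma quad_aux (A B : ℝ) (hA : 0 ≤ A) (hkey : ∀ ε : ℝ, 0 ≤ A * ε ^ 2 + B * ε) : B = 0 := by
  have hA1 : (0:ℝ) < A + 1 := by linarith
  have h := hkey (-B / (A + 1))
  have hB2 : B ^ 2 ≤ 0 := by
    have h2 : 0 ≤ (A * (-B / (A+1))^2 + B * (-B / (A+1))) * (A+1)^2 :=
      mul_nonneg h (by positivity)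
    have h3 : (A * (-B / (A+1))^2 + B * (-B / (A+1))) * (A+1)^2
        = A * B^2 - B^2 * (A+1) := by field_simp; ring
    nlinarith
  nlinarith [sq_nonneg B]

/-- **Pooled-regression equivalence (second alternative, equation (19)).**
Consider the pooled least-squares problem of regressing a balanced panel
`y i t` (for `i = 1, …, n` and `t = τ−R+1, …, τ+h`) on post-treatment time
dummies `1{t = τ+k}` (`k = 1, …, h`) and individual-specific polynomial time
trends of order `q`, where `q+1 ≤ R ≤ τ` and the pre-treatment polynomial
design matrix `X` (`X s k = (τ−R+1+s)^k`) has `XᵀX` invertible. Then any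
minimizer `(β̂, α̂)` of the pooled objective satisfies, for each `k = 1, …, h`,
`β̂ k = (1/n) ∑ᵢ (y i (τ+k) − ∑ⱼ ĉ i j (τ+k)^j)`, where `ĉ i = (XᵀX)⁻¹ Xᵀ yᵢ`
are the individual pre-treatment OLS coefficients. In particular, `β̂` at the
last horizon equals the polynomial-regression FAT at horizon `h`. -/
theorem pooled_regression_equivalence
    (n τ R q h : ℕ) (hn : 1 ≤ n) (hh : 1 ≤ h) (hR : q + 1 ≤ R) (hRτ : R ≤ τ)
    (y : Fin n → ℕ → ℝ)
    (X : Matrix (Fin R) (Fin (q + 1)) ℝ)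
    (hX : ∀ (s : Fin R) (k : Fin (q + 1)),
      X s k = ((τ - R + 1 + (s : ℕ) : ℕ) : ℝ) ^ (k : ℕ))
    (hinv : IsUnit (Xᵀ * X))
    (chat : Fin n → Fin (q + 1) → ℝ)
    (hchat : ∀ i, chat i
      = ((Xᵀ * X)⁻¹ * Xᵀ).mulVec (fun s => y i (τ - R + 1 + (s : ℕ))))
    (obj : (Fin h → ℝ) → (Fin n → Fin (q + 1) → ℝ) → ℝ)
    (hobj : ∀ (β : Fin h → ℝ) (α : Fin n → Fin (q + 1) → ℝ),
      obj β α = ∑ i : Fin n, ∑ t ∈ Finset.Icc (τ - R + 1) (τ + h),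
        (y i t - (∑ k : Fin h, if t = τ + 1 + (k : ℕ) then β k else 0)
          - ∑ k : Fin (q + 1), α i k * (t : ℝ) ^ (k : ℕ)) ^ 2)
    (βhat : Fin h → ℝ) (αhat : Fin n → Fin (q + 1) → ℝ)
    (hmin : ∀ (β : Fin h → ℝ) (α : Fin n → Fin (q + 1) → ℝ),
      obj βhat αhat ≤ obj β α) :
    ∀ k : Fin h,
      βhat k = (1 / (n : ℝ)) * ∑ i : Fin n,
        (y i (τ + 1 + (k : ℕ))
          - ∑ j : Fin (q + 1), chat i j * ((τ + 1 + (k : ℕ) : ℕ) : ℝ) ^ (j : ℕ)) := by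
  set T := Finset.Icc (τ - R + 1) (τ + h) with hT
  set r : Fin n → ℕ → ℝ := fun i t =>
      y i t - (∑ k : Fin h, if t = τ + 1 + (k : ℕ) then βhat k else 0)
        - ∑ k : Fin (q + 1), αhat i k * (t : ℝ) ^ (k : ℕ) with hr
  -- general first-order condition
  have foc : ∀ (dβ : Fin h → ℝ) (dα : Fin n → Fin (q + 1) → ℝ),
      ∑ i : Fin n, ∑ t ∈ T, r i t *
        ((∑ k : Fin h, if t = τ + 1 + (k : ℕ) then dβ k else 0)
          + ∑ k : Fin (q + 1), dα i k * (t : ℝ) ^ (k : ℕ)) = 0 := by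
    intro dβ dα
    set g : Fin n → ℕ → ℝ := fun i t =>
      (∑ k : Fin h, if t = τ + 1 + (k : ℕ) then dβ k else 0)
        + ∑ k : Fin (q + 1), dα i k * (t : ℝ) ^ (k : ℕ) with hg
    have key : ∀ ε : ℝ, 0 ≤ (∑ i : Fin n, ∑ t ∈ T, (g i t) ^ 2) * ε ^ 2
        + (-2 * ∑ i : Fin n, ∑ t ∈ T, r i t * g i t) * ε := by
      intro ε
      have h1 := hmin (fun k => βhat k + ε * dβ k) (fun i k => αhat i k + ε * dα i k)
      rw [hobj, hobj] at h1
      have hexp : (∑ i : Fin n, ∑ t ∈ T,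
          (y i t - (∑ k : Fin h, if t = τ + 1 + (k : ℕ) then βhat k + ε * dβ k else 0)
            - ∑ k : Fin (q + 1), (αhat i k + ε * dα i k) * (t : ℝ) ^ (k : ℕ)) ^ 2)
          = (∑ i : Fin n, ∑ t ∈ T, (r i t) ^ 2)
            + ((∑ i : Fin n, ∑ t ∈ T, (g i t) ^ 2) * ε ^ 2
              + (-2 * ∑ i : Fin n, ∑ t ∈ T, r i t * g i t) * ε) := by
        have step : ∀ i : Fin n, ∀ t ∈ T,
            (y i t - (∑ k : Fin h, if t = τ + 1 + (k : ℕ) then βhat k + ε * dβ k else 0)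
              - ∑ k : Fin (q + 1), (αhat i k + ε * dα i k) * (t : ℝ) ^ (k : ℕ)) ^ 2
            = (r i t) ^ 2 + ((g i t) ^ 2 * ε ^ 2 + (-2 * (r i t * g i t)) * ε) := by
          intro i t _
          have h2 : (∑ k : Fin h, if t = τ + 1 + (k : ℕ) then βhat k + ε * dβ k else 0)
              = (∑ k : Fin h, if t = τ + 1 + (k : ℕ) then βhat k else 0)
                + ε * (∑ k : Fin h, if t = τ + 1 + (k : ℕ) then dβ k else 0) := by
            rw [Finset.mul_sum, ← Finset.sum_add_distrib]
            exact Finset.sum_congr rfl fun k _ => by split_ifs <;> ring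
          have h3 : (∑ k : Fin (q + 1), (αhat i k + ε * dα i k) * (t : ℝ) ^ (k : ℕ))
              = (∑ k : Fin (q + 1), αhat i k * (t : ℝ) ^ (k : ℕ))
                + ε * (∑ k : Fin (q + 1), dα i k * (t : ℝ) ^ (k : ℕ)) := by
            rw [Finset.mul_sum, ← Finset.sum_add_distrib]
            exact Finset.sum_congr rfl fun k _ => by ring
          rw [h2, h3, hr, hg]; ring
        rw [Finset.sum_congr rfl fun i _ => Finset.sum_congr rfl (step i)]
        simp only [Finset.sum_add_distrib, ← Finset.sum_mul, ← Finset.mul_sum]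
      rw [hexp] at h1
      linarith
    have hAnn : 0 ≤ ∑ i : Fin n, ∑ t ∈ T, (g i t) ^ 2 := by positivity
    have := quad_aux _ _ hAnn key
    linarith
  -- FOC in the dummy directions
  have foc1 : ∀ k : Fin h, ∑ i : Fin n, r i (τ + 1 + (k : ℕ)) = 0 := by
    intro k
    have hfoc := foc (fun k' => if k' = k then 1 else 0) 0
    simp only [Pi.zero_apply] at hfoc
    have hgk : ∀ t : ℕ,
        ((∑ k' : Fin h, if t = τ + 1 + (k' : ℕ) then (if k' = k then (1:ℝ) else 0) else 0)
          + ∑ k' : Fin (q + 1), (0:ℝ) * (t : ℝ) ^ (k' : ℕ))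
        = if t = τ + 1 + (k : ℕ) then 1 else 0 := by
      intro t
      rw [Finset.sum_eq_single k]
      · simp
      · intro k' _ hne; simp [hne]
      · simp
    rw [Finset.sum_congr rfl fun i _ => Finset.sum_congr rfl fun t _ => by rw [hgk t]] at hfoc
    have hmem : τ + 1 + (k : ℕ) ∈ T := by
      rw [hT, Finset.mem_Icc]
      have := k.isLt
      omega
    calc ∑ i : Fin n, r i (τ + 1 + (k : ℕ))
        = ∑ i : Fin n, ∑ t ∈ T, r i t * (if t = τ + 1 + (k : ℕ) then 1 else 0) := by
          refine Finset.sum_congr rfl fun i _ => ?_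
          simp only [mul_ite, mul_one, mul_zero]
          rw [Finset.sum_ite_eq' T (τ + 1 + (k : ℕ)) (r i), if_pos hmem]
      _ = 0 := hfoc
  -- FOC in the polynomial directions (summed over individuals)
  have foc2 : ∀ j : Fin (q + 1), ∑ i : Fin n, ∑ t ∈ T, r i t * (t : ℝ) ^ (j : ℕ) = 0 := by
    intro j
    have hfoc := foc 0 (fun _ j' => if j' = j then 1 else 0)
    simp only [Pi.zero_apply] at hfoc
    have hgj : ∀ t : ℕ,
        ((∑ k' : Fin h, if t = τ + 1 + (k' : ℕ) then (0:ℝ) else 0)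
          + ∑ k' : Fin (q + 1), (if k' = j then (1:ℝ) else 0) * (t : ℝ) ^ (k' : ℕ))
        = (t : ℝ) ^ (j : ℕ) := by
      intro t
      simp only [ite_mul, one_mul, zero_mul, if_neg, ite_self, Finset.sum_const_zero, zero_add]
      rw [Finset.sum_ite_eq' Finset.univ j (fun k' : Fin (q+1) => (t : ℝ) ^ (k' : ℕ)),
        if_pos (Finset.mem_univ j)]
    rw [Finset.sum_congr rfl fun i _ => Finset.sum_congr rfl fun t _ => by rw [hgj t]] at hfoc
    exact hfoc
  -- splitting the time sum into pre- and post-treatment parts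
  have hsplit : ∀ f : ℕ → ℝ, ∑ t ∈ T, f t
      = (∑ s : Fin R, f (τ - R + 1 + (s : ℕ))) + ∑ k : Fin h, f (τ + 1 + (k : ℕ)) := by
    intro f
    have hUnion : T = Finset.Icc (τ - R + 1) τ ∪ Finset.Ioc τ (τ + h) := by
      ext t; simp only [hT, Finset.mem_Icc, Finset.mem_union, Finset.mem_Ioc]; omega
    have hdisj : Disjoint (Finset.Icc (τ - R + 1) τ) (Finset.Ioc τ (τ + h)) := by
      rw [Finset.disjoint_left]
      intro a ha hb
      simp only [Finset.mem_Icc] at ha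
      simp only [Finset.mem_Ioc] at hb
      omega
    rw [hUnion, Finset.sum_union hdisj]
    congr 1
    · rw [← Finset.Ico_add_one_right_eq_Icc, Finset.sum_Ico_eq_sum_range]
      have hcard : τ + 1 - (τ - R + 1) = R := by omega
      rw [hcard, ← Fin.sum_univ_eq_sum_range]
    · have hIoc : Finset.Ioc τ (τ + h) = Finset.Icc (τ + 1) (τ + h) := by
        ext t; simp only [Finset.mem_Ioc, Finset.mem_Icc]; omega
      rw [hIoc, ← Finset.Ico_add_one_right_eq_Icc, Finset.sum_Ico_eq_sum_range]
      have hcard : τ + h + 1 - (τ + 1) = h := by omega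
      rw [hcard, ← Fin.sum_univ_eq_sum_range]
  -- in the pre-treatment period the dummies vanish
  have hpre : ∀ (s : Fin R) (i : Fin n), r i (τ - R + 1 + (s : ℕ))
      = y i (τ - R + 1 + (s : ℕ))
        - ∑ k : Fin (q + 1), αhat i k * ((τ - R + 1 + (s : ℕ) : ℕ) : ℝ) ^ (k : ℕ) := by
    intro s i
    rw [hr]
    simp only
    have hz : (∑ k : Fin h, if τ - R + 1 + (s : ℕ) = τ + 1 + (k : ℕ) then βhat k else 0)
        = 0 := by
      apply Finset.sum_eq_zero
      intro k _
      rw [if_neg]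
      have := s.isLt
      omega
    rw [hz]
    ring
  set S : Fin R → ℝ := fun s => ∑ i : Fin n, y i (τ - R + 1 + (s : ℕ)) with hS
  set A : Fin (q + 1) → ℝ := fun j => ∑ i : Fin n, αhat i j with hAdef
  -- normal equations for the aggregated polynomial coefficients
  have hnormal : ∀ j : Fin (q + 1),
      ∑ s : Fin R, X s j * (S s - ∑ j' : Fin (q + 1), X s j' * A j') = 0 := by
    intro j
    have h2 := foc2 j
    rw [Finset.sum_comm] at h2
    rw [hsplit (fun t => ∑ i : Fin n, r i t * (t : ℝ) ^ (j : ℕ))] at h2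
    have hpost : (∑ k : Fin h, ∑ i : Fin n,
        r i (τ + 1 + (k : ℕ)) * ((τ + 1 + (k : ℕ) : ℕ) : ℝ) ^ (j : ℕ)) = 0 := by
      apply Finset.sum_eq_zero
      intro k _
      rw [← Finset.sum_mul, foc1 k, zero_mul]
    rw [hpost, add_zero] at h2
    rw [← h2]
    refine Finset.sum_congr rfl fun s _ => ?_
    rw [← Finset.sum_mul]
    have hri : (∑ i : Fin n, r i (τ - R + 1 + (s : ℕ)))
        = S s - ∑ j' : Fin (q + 1), X s j' * A j' := by
      rw [Finset.sum_congr rfl fun i _ => hpre s i, Finset.sum_sub_distrib]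
      congr 1
      rw [Finset.sum_comm]
      refine Finset.sum_congr rfl fun j' _ => ?_
      rw [← Finset.sum_mul, hX s j', hAdef]
      ring
    rw [hri, hX s j]
    ring
  -- solve the normal equations
  have hmv : (Xᵀ * X).mulVec A = Xᵀ.mulVec S := by
    have h0 : Xᵀ.mulVec (fun s => S s - ∑ j' : Fin (q + 1), X s j' * A j') = 0 := by
      funext j
      have := hnormal j
      simp only [Matrix.mulVec, dotProduct, Matrix.transpose_apply, Pi.zero_apply]
      exact this
    have h1 : (fun s => S s - ∑ j' : Fin (q + 1), X s j' * A j') = S - X.mulVec A := by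
      funext s
      simp [Matrix.mulVec, dotProduct]
    rw [h1, Matrix.mulVec_sub] at h0
    have h2 : Xᵀ.mulVec (X.mulVec A) = (Xᵀ * X).mulVec A := Matrix.mulVec_mulVec ..
    rw [h2] at h0
    exact (sub_eq_zero.mp h0).symm
  have hAeq : A = ((Xᵀ * X)⁻¹ * Xᵀ).mulVec S := by
    have hdet : IsUnit (Xᵀ * X).det := (Matrix.isUnit_iff_isUnit_det _).mp hinv
    have hinvmul : (Xᵀ * X)⁻¹ * (Xᵀ * X) = 1 := Matrix.nonsing_inv_mul _ hdet
    calc A = ((Xᵀ * X)⁻¹ * (Xᵀ * X)).mulVec A := by rw [hinvmul, Matrix.one_mulVec]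
      _ = (Xᵀ * X)⁻¹.mulVec ((Xᵀ * X).mulVec A) := (Matrix.mulVec_mulVec ..).symm
      _ = (Xᵀ * X)⁻¹.mulVec (Xᵀ.mulVec S) := by rw [hmv]
      _ = ((Xᵀ * X)⁻¹ * Xᵀ).mulVec S := Matrix.mulVec_mulVec ..
  -- aggregated OLS coefficients coincide with aggregated pooled coefficients
  have hchatsum : ∀ j : Fin (q + 1), (∑ i : Fin n, chat i j) = A j := by
    intro j
    rw [hAeq]
    simp only [hchat, Matrix.mulVec, dotProduct]
    rw [Finset.sum_comm]
    refine Finset.sum_congr rfl fun s _ => ?_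
    rw [hS, Finset.mul_sum]
  -- conclusion
  intro k
  have h1 := foc1 k
  have hdum : (∑ k' : Fin h, if τ + 1 + (k : ℕ) = τ + 1 + (k' : ℕ) then βhat k' else 0)
      = βhat k := by
    rw [Finset.sum_eq_single k]
    · simp
    · intro k' _ hne
      rw [if_neg]
      intro hc
      exact hne (Fin.ext (by omega)).symm
    · simp
  have hsum : (∑ i : Fin n, r i (τ + 1 + (k : ℕ)))
      = (∑ i : Fin n, y i (τ + 1 + (k : ℕ))) - n * βhat k
        - ∑ i : Fin n, ∑ j : Fin (q + 1),
            αhat i j * ((τ + 1 + (k : ℕ) : ℕ) : ℝ) ^ (j : ℕ) := by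
    rw [hr]
    simp only
    rw [Finset.sum_sub_distrib, Finset.sum_sub_distrib]
    congr 1
    congr 1
    rw [Finset.sum_congr rfl fun i _ => hdum, Finset.sum_const, Finset.card_univ,
      Fintype.card_fin, nsmul_eq_mul]
  have hα : (∑ i : Fin n, ∑ j : Fin (q + 1),
        αhat i j * ((τ + 1 + (k : ℕ) : ℕ) : ℝ) ^ (j : ℕ))
      = ∑ i : Fin n, ∑ j : Fin (q + 1),
        chat i j * ((τ + 1 + (k : ℕ) : ℕ) : ℝ) ^ (j : ℕ) := by
    rw [Finset.sum_comm, Finset.sum_comm (s := Finset.univ) (t := Finset.univ)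
      (f := fun i (j : Fin (q + 1)) => chat i j * ((τ + 1 + (k : ℕ) : ℕ) : ℝ) ^ (j : ℕ))]
    refine Finset.sum_congr rfl fun j _ => ?_
    rw [← Finset.sum_mul, ← Finset.sum_mul, hchatsum j, hAdef]
  have hn0 : (n : ℝ) ≠ 0 := by
    have : (0 : ℝ) < n := by exact_mod_cast hn
    linarith
  rw [hsum, hα] at h1
  rw [Finset.sum_sub_distrib]
  push_cast at h1 ⊢
  field_simp
  linarith
end

section
/- Identification of the ATT with a control group (DFAT): Define DFAT := (1/n₁)·Σ_{i=1}^{n₁} (Y_i − Ŷ_i) − (1/n₀)·Σ_{j=1}^{n₀} (Z_j − Ẑ_j). If the average forecast biases of the two groups are equal, i.e. (1/n₁)·Σ_{i=1}^{n₁} E[Y⁰_i − Ŷ_i] = (1/n₀)·Σ_{j=1}^{n₀} E[Z_j − Ẑ_j], then E[DFAT] = (1/n₁)·Σ_{i=1}^{n₁} E[Y_i − Y⁰_i], i.e. the expected DFAT equals the average treatment effect on the treated. -/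
open MeasureTheory

/-- **Identification of the ATT with a control group (DFAT).**
With `n₁` treated units (outcomes `Y i`, counterfactuals `Y0 i`, forecasts
`Yhat i`) and `n₀` control units (outcomes `Z j`, forecasts `Zhat j`), define
`DFAT := (1/n₁) ∑ᵢ (Y i − Yhat i) − (1/n₀) ∑ⱼ (Z j − Zhat j)`. If the average
forecast biases of the two groups are equal, i.e.
`(1/n₁) ∑ᵢ E[Y0 i − Yhat i] = (1/n₀) ∑ⱼ E[Z j − Zhat j]`, then
`E[DFAT] = (1/n₁) ∑ᵢ E[Y i − Y0 i]`, the average treatment effect on the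
treated. -/
theorem expected_DFAT_eq_ATT
    {Ω : Type*} [MeasurableSpace Ω] (μ : Measure Ω) [IsProbabilityMeasure μ]
    (n₁ n₀ : ℕ) (hn₁ : 1 ≤ n₁) (hn₀ : 1 ≤ n₀)
    (Y Y0 Yhat : Fin n₁ → Ω → ℝ) (Z Zhat : Fin n₀ → Ω → ℝ)
    (hY : ∀ i, Integrable (Y i) μ)
    (hY0 : ∀ i, Integrable (Y0 i) μ)
    (hYhat : ∀ i, Integrable (Yhat i) μ)
    (hZ : ∀ j, Integrable (Z j) μ)
    (hZhat : ∀ j, Integrable (Zhat j) μ)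
    (hbias : (1 / (n₁ : ℝ)) * ∑ i, ∫ ω, (Y0 i ω - Yhat i ω) ∂μ
      = (1 / (n₀ : ℝ)) * ∑ j, ∫ ω, (Z j ω - Zhat j ω) ∂μ) :
    ∫ ω, ((1 / (n₁ : ℝ)) * ∑ i, (Y i ω - Yhat i ω)
          - (1 / (n₀ : ℝ)) * ∑ j, (Z j ω - Zhat j ω)) ∂μ
      = (1 / (n₁ : ℝ)) * ∑ i, ∫ ω, (Y i ω - Y0 i ω) ∂μ := by
  have hYYhat : ∀ i : Fin n₁, Integrable (fun ω => Y i ω - Yhat i ω) μ :=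
    fun i => (hY i).sub (hYhat i)
  have hZZhat : ∀ j : Fin n₀, Integrable (fun ω => Z j ω - Zhat j ω) μ :=
    fun j => (hZ j).sub (hZhat j)
  have h1 : Integrable (fun ω => (1 / (n₁ : ℝ)) * ∑ i, (Y i ω - Yhat i ω)) μ :=
    (integrable_finset_sum Finset.univ (fun i _ => hYYhat i)).const_mul _
  have h2 : Integrable (fun ω => (1 / (n₀ : ℝ)) * ∑ j, (Z j ω - Zhat j ω)) μ :=
    (integrable_finset_sum Finset.univ (fun j _ => hZZhat j)).const_mul _
  rw [integral_sub h1 h2, integral_const_mul, integral_const_mul,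
    integral_finset_sum Finset.univ (fun i _ => hYYhat i),
    integral_finset_sum Finset.univ (fun j _ => hZZhat j), ← hbias]
  have key : ∀ i : Fin n₁,
      (∫ ω, (Y i ω - Yhat i ω) ∂μ) - (∫ ω, (Y0 i ω - Yhat i ω) ∂μ)
        = ∫ ω, (Y i ω - Y0 i ω) ∂μ := by
    intro i
    rw [integral_sub (hY i) (hYhat i), integral_sub (hY0 i) (hYhat i),
      integral_sub (hY i) (hY0 i)]
    ring
  rw [← mul_sub, ← Finset.sum_sub_distrib]
  simp_rw [key]
end
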